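/- For all real x with 0 < x ≤ 1/48, we have 1/(1-x)^(3/2) < 1 + (3/2)x + (3/8)x^(3/2). -/
import Mathlib

lemma stmt_0_aux (u : ℝ) (hu : 0 < u) (h48 : u^2 ≤ 1/48) :
    1 < (1 + (3/2)*u^2 + (3/8)*u^3)^2 * (1 - u^2)^3 := by
  have hub : u ≤ 679/4704 := by nlinarith [sq_nonneg (u - 1/7)]
  have hu1 : u ≤ 1 := by linarith
  have h3 : 0 ≤ u^3 := by positivity
  have h5 : 0 ≤ u^5 := by positivity
  have h6 : 0 ≤ u^6 := by positivity
  have h4 : u^4 ≤ (1/48)^2 := by nlinarith [sq_nonneg u]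
  have h7 : u^7 ≤ (1/48)^3 := by nlinarith [pow_nonneg hu.le 4, pow_nonneg hu.le 6, sq_nonneg u]
  have h8 : u^8 ≤ (1/48)^3 := by nlinarith [pow_nonneg hu.le 6, sq_nonneg u]
  have h9 : u^9 ≤ (1/48)^3 := by nlinarith [pow_nonneg hu.le 6, pow_nonneg hu.le 8, sq_nonneg u]
  have hR : 0 < 3/4 - 15/4*u - 9/8*u^2 + 89/64*u^3 - 9/8*u^4 + 213/64*u^5 + 21/8*u^6
      - 117/64*u^7 - 9/8*u^8 - 9/64*u^9 := by linarith
  nlinarith [mul_pos (pow_pos hu 3) hR]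

theorem stmt_0 (x : ℝ) (hx : 0 < x) (hx' : x ≤ 1/48) :
    1 / (1 - x) ^ ((3:ℝ)/2) < 1 + (3/2) * x + (3/8) * x ^ ((3:ℝ)/2) := by
  have hx1 : (0:ℝ) < 1 - x := by linarith
  have h32 : ∀ a : ℝ, 0 ≤ a → a ^ ((3:ℝ)/2) = Real.sqrt a ^ 3 := by
    intro a ha
    rw [show (3:ℝ)/2 = (1/2)*3 by ring, Real.rpow_mul ha, ← Real.sqrt_eq_rpow,
      show ((3:ℝ)) = ((3:ℕ):ℝ) by norm_num, Real.rpow_natCast]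
  rw [h32 x hx.le, h32 (1-x) hx1.le]
  obtain ⟨u, hupos, hu2⟩ : ∃ u : ℝ, 0 < u ∧ u^2 = x :=
    ⟨Real.sqrt x, Real.sqrt_pos.mpr hx, Real.sq_sqrt hx.le⟩
  obtain ⟨s, hspos, hs2⟩ : ∃ s : ℝ, 0 < s ∧ s^2 = 1 - x :=
    ⟨Real.sqrt (1-x), Real.sqrt_pos.mpr hx1, Real.sq_sqrt hx1.le⟩
  have hsx : Real.sqrt x = u := by
    rw [← hu2, Real.sqrt_sq hupos.le]
  have hss : Real.sqrt (1-x) = s := by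
    rw [← hs2, Real.sqrt_sq hspos.le]
  rw [hsx, hss]
  have hu48 : u^2 ≤ 1/48 := by rw [hu2]; exact hx'
  have hQ : (0:ℝ) < 1 + (3/2) * x + (3/8) * u^3 := by nlinarith
  have key : ((1 + (3/2) * x + (3/8) * u^3) * s^3)^2 > 1 := by
    have heq : ((1 + (3/2) * x + (3/8) * u^3) * s^3)^2
        = (1 + (3/2)*u^2 + (3/8)*u^3)^2 * (1 - u^2)^3 := by
      rw [hu2, ← hs2]; ring
    rw [heq]
    exact stmt_0_aux u hupos hu48
  have hprod : 1 < (1 + (3/2) * x + (3/8) * u^3) * s^3 := by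
    nlinarith [mul_pos hQ (pow_pos hspos 3)]
  rw [div_lt_iff₀ (pow_pos hspos 3)]
  linarith
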